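/- Let R ∈ ℕ^m, S ∈ ℕ^n with ∑_i R_i = ∑_j S_j, let I ⊆ Fin n, and let k be a positive integer. Suppose M : Fin m × Fin n → ℕ satisfies: every row sum of M is at most k·R_i, every column sum is at most k·S_j, and the column sum at each j ∈ I equals exactly k·S_j. Then M = Q₁ + ⋯ + Q_k where each Q_t satisfies: row sums at most R_i, column sums at most S_j, and column sum equal to S_j for each j ∈ I. -/

import Mathlib

set_option maxHeartbeats 1000000

lemma birkhoff_step_hall {α β : Type*} [Fintype α] [Fintype β] [DecidableEq α] [DecidableEq β]
    (k : ℕ) (B : α → β → ℕ) (hr : ∀ a, ∑ b, B a b = k + 1) (hc : ∀ b, ∑ a, B a b = k + 1) :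
    ∃ e : α ≃ β, ∀ a, 0 < B a (e a) := by
  classical
  have hall : ∀ s : Finset α, s.card ≤ (s.biUnion (fun a => Finset.univ.filter (fun b => 0 < B a b))).card := by
    intro s
    set U := s.biUnion (fun a => Finset.univ.filter (fun b => 0 < B a b)) with hU
    have key : (k+1) * s.card ≤ (k+1) * U.card := by
      calc (k+1) * s.card = ∑ a ∈ s, (k+1) := by rw [Finset.sum_const, smul_eq_mul, mul_comm]
        _ = ∑ a ∈ s, ∑ b ∈ U, B a b := by
            apply Finset.sum_congr rfl
            intro a ha
            rw [← hr a]
            refine (Finset.sum_subset (Finset.subset_univ U) ?_).symm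
            intro b _ hbU
            by_contra hpos
            exact hbU (Finset.mem_biUnion.mpr ⟨a, ha, Finset.mem_filter.mpr ⟨Finset.mem_univ b, Nat.pos_of_ne_zero hpos⟩⟩)
        _ ≤ ∑ a : α, ∑ b ∈ U, B a b := Finset.sum_le_sum_of_subset (Finset.subset_univ s)
        _ = ∑ b ∈ U, ∑ a : α, B a b := Finset.sum_comm
        _ = ∑ b ∈ U, (k+1) := by simp [hc]
        _ = (k+1) * U.card := by rw [Finset.sum_const, smul_eq_mul, mul_comm]
    exact Nat.le_of_mul_le_mul_left key (Nat.succ_pos k)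
  obtain ⟨f, hfinj, hf⟩ := (Finset.all_card_le_biUnion_card_iff_exists_injective _).mp hall
  have hcard : Fintype.card α = Fintype.card β := by
    have : (k+1) * Fintype.card α = (k+1) * Fintype.card β := by
      calc (k+1) * Fintype.card α = ∑ a : α, (k+1) := by rw [Finset.sum_const, Finset.card_univ, smul_eq_mul, mul_comm]
        _ = ∑ a : α, ∑ b : β, B a b := by simp [hr]
        _ = ∑ b : β, ∑ a : α, B a b := Finset.sum_comm
        _ = ∑ b : β, (k+1) := by simp [hc]
        _ = (k+1) * Fintype.card β := by rw [Finset.sum_const, Finset.card_univ, smul_eq_mul, mul_comm]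
    exact Nat.eq_of_mul_eq_mul_left (Nat.succ_pos k) this
  have hbij : Function.Bijective f := (Fintype.bijective_iff_injective_and_card f).mpr ⟨hfinj, hcard⟩
  refine ⟨Equiv.ofBijective f hbij, fun a => ?_⟩
  have := hf a
  simp only [Finset.mem_filter] at this
  simpa [Equiv.ofBijective_apply] using this.2

lemma birkhoff {α β : Type*} [Fintype α] [Fintype β] [DecidableEq α] [DecidableEq β] :
    ∀ (k : ℕ) (B : α → β → ℕ), (∀ a, ∑ b, B a b = k) → (∀ b, ∑ a, B a b = k) →
    ∃ F : Fin k → (α ≃ β), ∀ a b, B a b = ∑ t, (if F t a = b then 1 else 0) := by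
  intro k
  induction k with
  | zero =>
    intro B hr hc
    refine ⟨Fin.elim0, fun a b => ?_⟩
    have : B a b = 0 := by
      have := hr a
      have hb : b ∈ Finset.univ := Finset.mem_univ b
      exact (Finset.sum_eq_zero_iff.mp this) b hb
    simp [this]
  | succ k ih =>
    intro B hr hc
    obtain ⟨e, he⟩ := birkhoff_step_hall k B hr hc
    set B' : α → β → ℕ := fun a b => B a b - (if e a = b then 1 else 0) with hB'
    have key : ∀ a b, B a b = B' a b + (if e a = b then 1 else 0) := by
      intro a b
      by_cases h : e a = b
      · have := he a
        subst h
        simp [hB']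
        omega
      · simp [hB', h]
    have hr' : ∀ a, ∑ b, B' a b = k := by
      intro a
      have h1 : ∑ b, B a b = ∑ b, B' a b + ∑ b, (if e a = b then 1 else 0) := by
        rw [← Finset.sum_add_distrib]
        exact Finset.sum_congr rfl (fun b _ => key a b)
      have h2 : ∑ b, (if e a = b then 1 else 0) = 1 := Finset.sum_ite_eq _ _ (fun _ => 1) |>.trans (by simp)
      have := hr a
      omega
    have hc' : ∀ b, ∑ a, B' a b = k := by
      intro b
      have h1 : ∑ a, B a b = ∑ a, B' a b + ∑ a, (if e a = b then 1 else 0) := by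
        rw [← Finset.sum_add_distrib]
        exact Finset.sum_congr rfl (fun a _ => key a b)
      have h2 : ∑ a, (if e a = b then 1 else 0) = 1 := by
        have : ∀ a : α, (if e a = b then (1:ℕ) else 0) = (if a = e.symm b then 1 else 0) := by
          intro a
          congr 1
          simp [Equiv.eq_symm_apply, eq_comm]
        rw [Finset.sum_congr rfl (fun a _ => this a)]
        simp
      have := hc b
      omega
    obtain ⟨F', hF'⟩ := ih B' hr' hc'
    refine ⟨Fin.cons e F', fun a b => ?_⟩
    rw [Fin.sum_univ_succ]
    simp only [Fin.cons_zero, Fin.cons_succ]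
    rw [← hF' a b]
    rw [key a b]
    omega


lemma count_div (k N a : ℕ) (hk : 0 < k) (ha : k * (a + 1) ≤ N) :
    ∑ s : Fin N, (if (s : ℕ) / k = a then 1 else 0) = k := by
  rw [Fin.sum_univ_eq_sum_range (fun s => if s / k = a then (1:ℕ) else 0) N]
  rw [Finset.sum_boole]
  have hf : (Finset.range N).filter (fun s => s / k = a) = Finset.Ico (k*a) (k*a+k) := by
    ext s
    simp only [Finset.mem_filter, Finset.mem_range, Finset.mem_Ico]
    constructor
    · rintro ⟨hs, rfl⟩
      refine ⟨Nat.mul_div_le s k, ?_⟩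
      have h2 : s < s/k*k + k := Nat.lt_div_mul_add hk
      nlinarith
    · rintro ⟨h1, h2⟩
      have : s / k = a := Nat.div_eq_of_lt_le (by linarith [mul_comm a k]) (by nlinarith)
      exact ⟨by linarith [Nat.mul_succ k a], this⟩
  rw [hf, Nat.card_Ico]
  simp

lemma sum_fin_eq_one (N x : ℕ) (h : x < N) : ∑ a : Fin N, (if x = (a : ℕ) then (1:ℕ) else 0) = 1 := by
  rw [Fin.sum_univ_eq_sum_range (fun a => if x = a then (1:ℕ) else 0) N]
  rw [Finset.sum_ite_eq]
  simp [h]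


lemma exact_decomp (m n k : ℕ) (hk : 0 < k) (R : Fin m → ℕ) (S : Fin n → ℕ)
    (M : Fin m × Fin n → ℕ)
    (hrow : ∀ i, ∑ j, M (i, j) = k * R i)
    (hcol : ∀ j, ∑ i, M (i, j) = k * S j) :
    ∃ Q : Fin k → (Fin m × Fin n → ℕ),
      (∀ t i, ∑ j, Q t (i, j) = R i) ∧ (∀ t j, ∑ i, Q t (i, j) = S j) ∧
      (∀ p, M p = ∑ t, Q t p) := by
  classical
  have cardr : ∀ i, Fintype.card (Σ j : Fin n, Fin (M (i, j))) = Fintype.card (Fin (k * R i)) := by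
    intro i; simp [Fintype.card_sigma, hrow i]
  have cardc : ∀ j, Fintype.card (Σ i : Fin m, Fin (M (i, j))) = Fintype.card (Fin (k * S j)) := by
    intro j; simp [Fintype.card_sigma, hcol j]
  let ρ : ∀ i, (Σ j : Fin n, Fin (M (i, j))) ≃ Fin (k * R i) := fun i => Fintype.equivOfCardEq (cardr i)
  let γ : ∀ j, (Σ i : Fin m, Fin (M (i, j))) ≃ Fin (k * S j) := fun j => Fintype.equivOfCardEq (cardc j)
  have hρ : ∀ (i : Fin m) (v : Σ j : Fin n, Fin (M (i,j))), ((ρ i v : Fin (k * R i)) : ℕ) / k < R i := by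
    intro i v
    exact (Nat.div_lt_iff_lt_mul hk).mpr (lt_of_lt_of_eq (ρ i v).2 (mul_comm k (R i)))
  have hγ : ∀ (j : Fin n) (w : Σ i : Fin m, Fin (M (i,j))), ((γ j w : Fin (k * S j)) : ℕ) / k < S j := by
    intro j w
    exact (Nat.div_lt_iff_lt_mul hk).mpr (lt_of_lt_of_eq (γ j w).2 (mul_comm k (S j)))
  set B : (Σ i : Fin m, Fin (R i)) → (Σ j : Fin n, Fin (S j)) → ℕ :=
    fun r c => ∑ u : Fin (M (r.1, c.1)),
      if ((ρ r.1 ⟨c.1, u⟩ : ℕ) / k = (r.2 : ℕ) ∧ (γ c.1 ⟨r.1, u⟩ : ℕ) / k = (c.2 : ℕ)) then 1 else 0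
    with hB
  -- row sums of B
  have rowB : ∀ r : (Σ i : Fin m, Fin (R i)), ∑ c, B r c = k := by
    rintro ⟨i, a⟩
    rw [← Finset.univ_sigma_univ, Finset.sum_sigma]
    have step1 : ∀ j : Fin n, ∑ b : Fin (S j), B ⟨i,a⟩ ⟨j,b⟩
        = ∑ u : Fin (M (i,j)), (if (ρ i ⟨j, u⟩ : ℕ) / k = (a : ℕ) then (1:ℕ) else 0) := by
      intro j
      simp only [hB]
      refine (Finset.sum_comm (t := (Finset.univ : Finset (Fin (M (i,j)))))).trans ?_
      refine Finset.sum_congr rfl fun u _ => ?_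
      by_cases h : (ρ i ⟨j, u⟩ : ℕ) / k = (a : ℕ)
      · simp only [h, true_and, if_pos]
        exact sum_fin_eq_one (S j) _ (hγ j ⟨i, u⟩)
      · simp [h]
    rw [Finset.sum_congr rfl (fun j _ => step1 j)]
    rw [← Finset.sum_sigma Finset.univ (fun _ => Finset.univ)
      (fun v : Σ j : Fin n, Fin (M (i,j)) => if (ρ i ⟨v.1, v.2⟩ : ℕ) / k = (a : ℕ) then (1:ℕ) else 0)]
    rw [Finset.univ_sigma_univ]
    have : ∀ v : (Σ j : Fin n, Fin (M (i,j))),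
        (if (ρ i ⟨v.1, v.2⟩ : ℕ) / k = (a : ℕ) then (1:ℕ) else 0)
        = (fun s : Fin (k * R i) => if (s : ℕ) / k = (a : ℕ) then (1:ℕ) else 0) (ρ i v) := by
      rintro ⟨j, u⟩; rfl
    exact (Finset.sum_congr rfl (fun v _ => this v)).trans
      ((Equiv.sum_comp (ρ i) _).trans (count_div k (k * R i) a hk (Nat.mul_le_mul_left k a.2)))
  -- column sums of B
  have colB : ∀ c : (Σ j : Fin n, Fin (S j)), ∑ r, B r c = k := by
    rintro ⟨j, b⟩
    rw [← Finset.univ_sigma_univ, Finset.sum_sigma]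
    have step1 : ∀ i : Fin m, ∑ a : Fin (R i), B ⟨i,a⟩ ⟨j,b⟩
        = ∑ u : Fin (M (i,j)), (if (γ j ⟨i, u⟩ : ℕ) / k = (b : ℕ) then (1:ℕ) else 0) := by
      intro i
      simp only [hB]
      refine (Finset.sum_comm (t := (Finset.univ : Finset (Fin (M (i,j)))))).trans ?_
      refine Finset.sum_congr rfl fun u _ => ?_
      by_cases h : (γ j ⟨i, u⟩ : ℕ) / k = (b : ℕ)
      · simp only [h, and_true, if_pos]
        exact sum_fin_eq_one (R i) _ (hρ i ⟨j, u⟩)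
      · simp [h]
    rw [Finset.sum_congr rfl (fun i _ => step1 i)]
    rw [← Finset.sum_sigma Finset.univ (fun _ => Finset.univ)
      (fun w : Σ i : Fin m, Fin (M (i,j)) => if (γ j ⟨w.1, w.2⟩ : ℕ) / k = (b : ℕ) then (1:ℕ) else 0)]
    rw [Finset.univ_sigma_univ]
    have : ∀ w : (Σ i : Fin m, Fin (M (i,j))),
        (if (γ j ⟨w.1, w.2⟩ : ℕ) / k = (b : ℕ) then (1:ℕ) else 0)
        = (fun s : Fin (k * S j) => if (s : ℕ) / k = (b : ℕ) then (1:ℕ) else 0) (γ j w) := by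
      rintro ⟨i, u⟩; rfl
    exact (Finset.sum_congr rfl (fun w _ => this w)).trans
      ((Equiv.sum_comp (γ j) _).trans (count_div k (k * S j) b hk (Nat.mul_le_mul_left k b.2)))
  -- aggregation
  have agg : ∀ (i : Fin m) (j : Fin n),
      ∑ a : Fin (R i), ∑ b : Fin (S j), B ⟨i,a⟩ ⟨j,b⟩ = M (i,j) := by
    intro i j
    simp only [hB]
    have swap1 : ∀ a : Fin (R i), ∑ b : Fin (S j), ∑ u : Fin (M (i,j)),
        (if ((ρ i ⟨j, u⟩ : ℕ) / k = (a : ℕ) ∧ (γ j ⟨i, u⟩ : ℕ) / k = (b : ℕ)) then (1:ℕ) else 0)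
        = ∑ u : Fin (M (i,j)), (if (ρ i ⟨j, u⟩ : ℕ) / k = (a : ℕ) then (1:ℕ) else 0) := by
      intro a
      rw [Finset.sum_comm]
      refine Finset.sum_congr rfl fun u _ => ?_
      by_cases h : (ρ i ⟨j, u⟩ : ℕ) / k = (a : ℕ)
      · simp only [h, true_and, if_pos]
        exact sum_fin_eq_one (S j) _ (hγ j ⟨i, u⟩)
      · simp [h]
    rw [Finset.sum_congr rfl (fun a _ => swap1 a)]
    rw [Finset.sum_comm]
    have inner : ∀ u : Fin (M (i,j)),
        ∑ a : Fin (R i), (if (ρ i ⟨j, u⟩ : ℕ) / k = (a : ℕ) then (1:ℕ) else 0) = 1 :=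
      fun u => sum_fin_eq_one (R i) _ (hρ i ⟨j, u⟩)
    rw [Finset.sum_congr rfl (fun u _ => inner u)]
    simp
  -- apply Birkhoff
  obtain ⟨F, hF⟩ := birkhoff k B rowB colB
  refine ⟨fun t p => ∑ a : Fin (R p.1), ∑ b : Fin (S p.2),
    (if F t ⟨p.1, a⟩ = ⟨p.2, b⟩ then 1 else 0), ?_, ?_, ?_⟩
  · -- row sums of Q
    intro t i
    show ∑ j : Fin n, ∑ a : Fin (R i), ∑ b : Fin (S j), (if F t ⟨i, a⟩ = ⟨j, b⟩ then (1:ℕ) else 0) = R i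
    have : ∀ a : Fin (R i), ∑ j : Fin n, ∑ b : Fin (S j),
        (if F t ⟨i, a⟩ = ⟨j, b⟩ then (1:ℕ) else 0) = 1 := by
      intro a
      rw [← Finset.sum_sigma Finset.univ (fun _ => Finset.univ)
        (fun c : Σ j : Fin n, Fin (S j) => if F t ⟨i, a⟩ = ⟨c.1, c.2⟩ then (1:ℕ) else 0)]
      rw [Finset.univ_sigma_univ]
      have : ∀ c : (Σ j : Fin n, Fin (S j)),
          (if F t ⟨i, a⟩ = ⟨c.1, c.2⟩ then (1:ℕ) else 0) = (if F t ⟨i, a⟩ = c then (1:ℕ) else 0) := by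
        rintro ⟨j, b⟩; rfl
      rw [Finset.sum_congr rfl (fun c _ => this c)]
      rw [Finset.sum_ite_eq Finset.univ (F t ⟨i, a⟩) (fun _ => (1:ℕ))]
      simp
    rw [Finset.sum_comm]
    rw [Finset.sum_congr rfl (fun a _ => this a)]
    simp
  · -- column sums of Q
    intro t j
    show ∑ i : Fin m, ∑ a : Fin (R i), ∑ b : Fin (S j), (if F t ⟨i, a⟩ = ⟨j, b⟩ then (1:ℕ) else 0) = S j
    have key : ∀ r : (Σ i : Fin m, Fin (R i)), ∑ b : Fin (S j),
        (if F t ⟨r.1, r.2⟩ = ⟨j, b⟩ then (1:ℕ) else 0)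
        = (fun c : Σ j' : Fin n, Fin (S j') => ∑ b : Fin (S j), (if c = ⟨j, b⟩ then (1:ℕ) else 0)) (F t r) := by
      rintro ⟨i, a⟩; rfl
    calc ∑ i : Fin m, ∑ a : Fin (R i), ∑ b : Fin (S j), (if F t ⟨i, a⟩ = ⟨j, b⟩ then (1:ℕ) else 0)
        = ∑ r : (Σ i : Fin m, Fin (R i)), ∑ b : Fin (S j),
            (if F t ⟨r.1, r.2⟩ = ⟨j, b⟩ then (1:ℕ) else 0) := by
          rw [← Finset.univ_sigma_univ, Finset.sum_sigma]
      _ = ∑ c : (Σ j' : Fin n, Fin (S j')), ∑ b : Fin (S j), (if c = ⟨j, b⟩ then (1:ℕ) else 0) :=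
          (Finset.sum_congr rfl (fun r _ => key r)).trans
            (Equiv.sum_comp (F t)
              (fun c : Σ j' : Fin n, Fin (S j') => ∑ b : Fin (S j), if c = ⟨j, b⟩ then (1:ℕ) else 0))
      _ = ∑ b : Fin (S j), ∑ c : (Σ j' : Fin n, Fin (S j')), (if c = ⟨j, b⟩ then (1:ℕ) else 0) :=
          Finset.sum_comm
      _ = S j := by
          have : ∀ b : Fin (S j), ∑ c : (Σ j' : Fin n, Fin (S j')),
              (if c = ⟨j, b⟩ then (1:ℕ) else 0) = 1 := by
            intro b
            rw [Finset.sum_ite_eq' Finset.univ (⟨j, b⟩ : Σ j' : Fin n, Fin (S j')) (fun _ => (1:ℕ))]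
            simp
          rw [Finset.sum_congr rfl (fun b _ => this b)]
          simp
  · -- total
    rintro ⟨i, j⟩
    show M (i, j) = ∑ t : Fin k, ∑ a : Fin (R i), ∑ b : Fin (S j), (if F t ⟨i, a⟩ = ⟨j, b⟩ then (1:ℕ) else 0)
    rw [Finset.sum_comm]
    rw [← agg i j]
    refine Finset.sum_congr rfl fun a _ => ?_
    rw [Finset.sum_comm]
    refine (Finset.sum_congr rfl fun b _ => ?_)
    exact hF ⟨i, a⟩ ⟨j, b⟩


theorem stmt_9 (m n k : ℕ) (hk : 0 < k) (R : Fin m → ℕ) (S : Fin n → ℕ)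
    (hRS : ∑ i, R i = ∑ j, S j) (I : Set (Fin n)) (M : Fin m × Fin n → ℕ)
    (hrow : ∀ i, ∑ j : Fin n, M (i, j) ≤ k * R i)
    (hcol : ∀ j, ∑ i : Fin m, M (i, j) ≤ k * S j)
    (hI : ∀ j ∈ I, ∑ i : Fin m, M (i, j) = k * S j) :
    ∃ Q : Fin k → (Fin m × Fin n → ℕ),
      (∀ t, ∀ i, ∑ j : Fin n, Q t (i, j) ≤ R i) ∧
      (∀ t, ∀ j, ∑ i : Fin m, Q t (i, j) ≤ S j) ∧
      (∀ t, ∀ j ∈ I, ∑ i : Fin m, Q t (i, j) = S j) ∧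
      (∀ p, M p = ∑ t : Fin k, Q t p) := by
  classical
  set r : Fin m → ℕ := fun i => ∑ j, M (i, j) with hrdef
  set c : Fin n → ℕ := fun j => ∑ i, M (i, j) with hcdef
  have hrc : ∑ i, r i = ∑ j, c j := Finset.sum_comm
  set M' : Fin (m+1) × Fin (n+1) → ℕ := fun p =>
    Fin.lastCases
      (Fin.lastCases (∑ j, c j) (fun j => k * S j - c j) p.2)
      (fun i => Fin.lastCases (k * R i - r i) (fun j => M (i, j)) p.2) p.1 with hM'
  set R' : Fin (m+1) → ℕ := Fin.snoc R (∑ j, S j) with hR'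
  set S' : Fin (n+1) → ℕ := Fin.snoc S (∑ i, R i) with hS'
  have hM'cc : ∀ (i : Fin m) (j : Fin n), M' (i.castSucc, j.castSucc) = M (i, j) := by
    intro i j; simp [hM']
  have hM'cl : ∀ (i : Fin m), M' (i.castSucc, Fin.last n) = k * R i - r i := by
    intro i; simp [hM']
  have hM'lc : ∀ (j : Fin n), M' (Fin.last m, j.castSucc) = k * S j - c j := by
    intro j; simp [hM']
  have hM'll : M' (Fin.last m, Fin.last n) = ∑ j, c j := by
    simp [hM']
  have hrow' : ∀ i : Fin (m+1), ∑ j : Fin (n+1), M' (i, j) = k * R' i := by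
    intro i
    induction i using Fin.lastCases with
    | last =>
      rw [Fin.sum_univ_castSucc]
      have h1 : ∀ j : Fin n, M' (Fin.last m, j.castSucc) = k * S j - c j := hM'lc
      rw [Finset.sum_congr rfl (fun j _ => h1 j), hM'll]
      have h2 : ∑ j, (k * S j - c j) + ∑ j, c j = ∑ j, k * S j := by
        rw [← Finset.sum_add_distrib]
        exact Finset.sum_congr rfl (fun j _ => Nat.sub_add_cancel (hcol j))
      rw [h2, ← Finset.mul_sum]
      simp [hR', Fin.snoc_last]
    | cast i =>
      rw [Fin.sum_univ_castSucc]
      rw [Finset.sum_congr rfl (fun j _ => hM'cc i j), hM'cl i]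
      simp only [hR', Fin.snoc_castSucc]
      have h1 := hrow i
      have hri : r i = ∑ j : Fin n, M (i, j) := rfl
      omega
  have hcol' : ∀ j : Fin (n+1), ∑ i : Fin (m+1), M' (i, j) = k * S' j := by
    intro j
    induction j using Fin.lastCases with
    | last =>
      rw [Fin.sum_univ_castSucc]
      rw [Finset.sum_congr rfl (fun i _ => hM'cl i), hM'll]
      have h2 : ∑ i, (k * R i - r i) + ∑ i, r i = ∑ i, k * R i := by
        rw [← Finset.sum_add_distrib]
        exact Finset.sum_congr rfl (fun i _ => Nat.sub_add_cancel (hrow i))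
      rw [← hrc, h2, ← Finset.mul_sum]
      simp [hS', Fin.snoc_last]
    | cast j =>
      rw [Fin.sum_univ_castSucc]
      rw [Finset.sum_congr rfl (fun i _ => hM'cc i j), hM'lc j]
      simp only [hS', Fin.snoc_castSucc]
      have h1 := hcol j
      have hcj : c j = ∑ i : Fin m, M (i, j) := rfl
      omega
  obtain ⟨Q', hQr, hQc, hQs⟩ := exact_decomp (m+1) (n+1) k hk R' S' M' hrow' hcol'
  refine ⟨fun t p => Q' t (p.1.castSucc, p.2.castSucc), ?_, ?_, ?_, ?_⟩
  · intro t i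
    show ∑ j : Fin n, Q' t (i.castSucc, j.castSucc) ≤ R i
    have h1 := hQr t i.castSucc
    rw [Fin.sum_univ_castSucc] at h1
    simp only [hR', Fin.snoc_castSucc] at h1
    omega
  · intro t j
    show ∑ i : Fin m, Q' t (i.castSucc, j.castSucc) ≤ S j
    have h1 := hQc t j.castSucc
    rw [Fin.sum_univ_castSucc] at h1
    simp only [hS', Fin.snoc_castSucc] at h1
    omega
  · intro t j hj
    show ∑ i : Fin m, Q' t (i.castSucc, j.castSucc) = S j
    -- each part's column sum ≤ S j, and total = k * S j forces equality
    have hle : ∀ t' : Fin k, ∑ i : Fin m, Q' t' (i.castSucc, j.castSucc) ≤ S j := by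
      intro t'
      have h1 := hQc t' j.castSucc
      rw [Fin.sum_univ_castSucc] at h1
      simp only [hS', Fin.snoc_castSucc] at h1
      omega
    have htot : ∑ t' : Fin k, ∑ i : Fin m, Q' t' (i.castSucc, j.castSucc) = k * S j := by
      rw [Finset.sum_comm]
      have : ∀ i : Fin m, ∑ t' : Fin k, Q' t' (i.castSucc, j.castSucc) = M (i, j) := by
        intro i
        rw [← hQs (i.castSucc, j.castSucc), hM'cc]
      rw [Finset.sum_congr rfl (fun i _ => this i)]
      exact hI j hj
    by_contra hne
    have hlt : ∑ i : Fin m, Q' t (i.castSucc, j.castSucc) < S j :=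
      lt_of_le_of_ne (hle t) hne
    have : ∑ t' : Fin k, ∑ i : Fin m, Q' t' (i.castSucc, j.castSucc) < ∑ t' : Fin k, S j :=
      Finset.sum_lt_sum (fun t' _ => hle t') ⟨t, Finset.mem_univ t, hlt⟩
    rw [htot] at this
    simp only [Finset.sum_const, Finset.card_univ, Fintype.card_fin, smul_eq_mul] at this
    omega
  · rintro ⟨i, j⟩
    show M (i, j) = ∑ t : Fin k, Q' t (i.castSucc, j.castSucc)
    rw [← hM'cc i j]
    exact hQs (i.castSucc, j.castSucc)
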